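/- arXiv:1809.10156 — 5 statements merged into one kernel-verified Lean document; each statement's English description precedes it below -/
import Mathlib

section
/- Let p be a probability distribution on a countable index set, with entries ordered non-increasingly, and let q consist of the M largest entries and r the remaining entries. Then the sum of the M largest probabilities satisfies ∑_{j=1}^M p_j ≥ 1 − (H(p) − H(q)) / (log M − log ∑_{j=1}^M p_j), where H denotes the Shannon entropy (with any fixed logarithm base). -/
open scoped BigOperators

/-- For a non-increasingly ordered probability distribution `p` on ℕ
with finite Shannon entropy, the sum of the `M` largest probabilities satisfies
`∑_{j<M} p j ≥ 1 − (H(p) − H(q)) / (log M − log ∑_{j<M} p j)`,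
where `q` consists of the `M` largest entries of `p`. -/
theorem lowRankApprox_first
    (p : ℕ → ℝ) (M : ℕ)
    (hM : 2 ≤ M)
    (hnn : ∀ j, 0 ≤ p j)
    (hmono : Antitone p)
    (hsum : HasSum p 1)
    (hent : Summable (fun j => p j * Real.log (p j))) :
    1 - ((-∑' j, p j * Real.log (p j)) - (-∑ j ∈ Finset.range M, p j * Real.log (p j))) /
        (Real.log M - Real.log (∑ j ∈ Finset.range M, p j))
      ≤ ∑ j ∈ Finset.range M, p j := by
  have hsummable : Summable p := hsum.summable
  set S := ∑ j ∈ Finset.range M, p j with hSdef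
  have hMpos : (0:ℝ) < M := by exact_mod_cast (by omega : 0 < M)
  have hp0 : 0 < p 0 := by
    by_contra h
    push_neg at h
    have h0 : p 0 = 0 := le_antisymm h (hnn 0)
    have hz : ∀ j, p j = 0 := fun j => le_antisymm (h0 ▸ hmono (Nat.zero_le j)) (hnn j)
    have : (1:ℝ) = 0 := by
      rw [← hsum.tsum_eq]
      simp [hz]
    norm_num at this
  have hS0 : 0 < S :=
    lt_of_lt_of_le hp0 (Finset.single_le_sum (fun i _ => hnn i)
      (Finset.mem_range.mpr (by omega)))
  have hS1 : S ≤ 1 := by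
    rw [← hsum.tsum_eq]
    exact Summable.sum_le_tsum _ (fun i _ => hnn i) hsummable
  have hD : 0 < Real.log M - Real.log S := by
    have h1 : Real.log S ≤ 0 := Real.log_nonpos (le_of_lt hS0) hS1
    have h2 : 0 < Real.log M := Real.log_pos (by exact_mod_cast (by omega : 1 < M))
    linarith
  have htail_le : ∀ j, p (j + M) * M ≤ S := by
    intro j
    have h1 : ∀ i ∈ Finset.range M, p (j + M) ≤ p i := by
      intro i hi
      exact hmono (by simp at hi; omega)
    have := Finset.card_nsmul_le_sum (Finset.range M) p (p (j + M)) h1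
    simpa [Finset.card_range, nsmul_eq_mul, mul_comm] using this
  have hkey : ∀ j, p (j + M) * (Real.log M - Real.log S)
      ≤ -(p (j + M) * Real.log (p (j + M))) := by
    intro j
    rcases eq_or_lt_of_le (hnn (j + M)) with h | h
    · simp [← h]
    · have hle : p (j + M) ≤ S / M := by
        rw [le_div_iff₀ hMpos]
        exact htail_le j
      have hlog : Real.log (p (j + M)) ≤ Real.log S - Real.log M := by
        calc Real.log (p (j + M)) ≤ Real.log (S / M) := Real.log_le_log h hle
          _ = Real.log S - Real.log M := Real.log_div (ne_of_gt hS0) (ne_of_gt hMpos)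
      nlinarith
  have hsum_tail : Summable (fun j => p (j + M)) := (summable_nat_add_iff M).mpr hsummable
  have hent_tail : Summable (fun j => p (j + M) * Real.log (p (j + M))) :=
    (summable_nat_add_iff M).mpr hent
  have hT : ∑' j, p (j + M) = 1 - S := by
    have h := Summable.sum_add_tsum_nat_add M hsummable
    rw [hsum.tsum_eq] at h
    linarith
  have hA : (-∑' j, p j * Real.log (p j)) - (-∑ j ∈ Finset.range M, p j * Real.log (p j))
      = -∑' j, p (j + M) * Real.log (p (j + M)) := by
    have h := Summable.sum_add_tsum_nat_add M hent
    linarith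
  have hmain : (1 - S) * (Real.log M - Real.log S)
      ≤ -∑' j, p (j + M) * Real.log (p (j + M)) := by
    calc (1 - S) * (Real.log M - Real.log S)
        = ∑' j, p (j + M) * (Real.log M - Real.log S) := by rw [tsum_mul_right, hT]
      _ ≤ ∑' j, -(p (j + M) * Real.log (p (j + M))) :=
          Summable.tsum_le_tsum hkey (hsum_tail.mul_right _) hent_tail.neg
      _ = -∑' j, p (j + M) * Real.log (p (j + M)) := tsum_neg
  rw [hA]
  have h := (le_div_iff₀ hD).mpr hmain
  linarith
end

section
/- Let p be a probability distribution on a countable index set with finite Shannon entropy H(p), with entries ordered non-increasingly. Then for every M ≥ 2, the sum of the M largest probabilities satisfies ∑_{j=1}^M p_j ≥ 1 − H(p)/log M. -/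
open scoped BigOperators

/-- For a non-increasingly ordered probability distribution `p` on ℕ
with finite Shannon entropy `H(p) = -∑' j, p j * log (p j)`, for every `M ≥ 2`,
the sum of the `M` largest probabilities satisfies `∑_{j<M} p j ≥ 1 − H(p)/log M`. -/
theorem lowRankApprox_second
    (p : ℕ → ℝ) (M : ℕ)
    (hM : 2 ≤ M)
    (hnn : ∀ j, 0 ≤ p j)
    (hmono : Antitone p)
    (hsum : HasSum p 1)
    (hent : Summable (fun j => p j * Real.log (p j))) :
    1 - (-∑' j, p j * Real.log (p j)) / Real.log M ≤ ∑ j ∈ Finset.range M, p j := by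
  have hM1 : (1 : ℝ) < M := by exact_mod_cast lt_of_lt_of_le one_lt_two hM
  have hlogM : 0 < Real.log M := Real.log_pos hM1
  have hsummp : Summable p := hsum.summable
  have hp1 : ∀ j, p j ≤ 1 := fun j =>
    le_hasSum hsum j (fun i _ => hnn i)
  have hterm : ∀ j, 0 ≤ -(p j * Real.log (p j)) := by
    intro j
    have h := Real.log_nonpos (hnn j) (hp1 j)
    nlinarith [hnn j]
  have hpj : ∀ j : ℕ, ((j : ℝ) + 1) * p j ≤ 1 := by
    intro j
    have h1 : ∑ i ∈ Finset.range (j + 1), p i ≤ 1 :=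
      sum_le_hasSum _ (fun i _ => hnn i) hsum
    have h2 := Finset.card_nsmul_le_sum (Finset.range (j + 1)) p (p j)
      (fun i hi => hmono (Nat.lt_succ_iff.mp (Finset.mem_range.mp hi)))
    rw [Finset.card_range, nsmul_eq_mul] at h2
    push_cast at h2
    linarith
  -- key pointwise inequality
  have key : ∀ j, (if M ≤ j then p j else 0) * Real.log M ≤ -(p j * Real.log (p j)) := by
    intro j
    by_cases hj : M ≤ j
    · simp only [hj, if_true]
      rcases eq_or_lt_of_le (hnn j) with h0 | h0
      · simp [← h0]
      · have hle : p j ≤ 1 / M := by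
          have hjM : (M : ℝ) ≤ (j : ℝ) + 1 := by
            have : (M : ℝ) ≤ (j : ℝ) := by exact_mod_cast hj
            linarith
          rw [le_div_iff₀ (by positivity : (0:ℝ) < (M:ℝ))]
          nlinarith [hpj j, hnn j]
        have hlog : Real.log (p j) ≤ -Real.log M := by
          calc Real.log (p j) ≤ Real.log (1 / M) := Real.log_le_log h0 hle
            _ = -Real.log M := by rw [Real.log_div one_ne_zero (by positivity), Real.log_one]; ring
        nlinarith
    · simp only [hj, if_false, zero_mul]
      exact hterm j
  have hnng : ∀ j, 0 ≤ (if M ≤ j then p j else 0) * Real.log M := by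
    intro j
    by_cases hj : M ≤ j <;> simp [hj]
    exact mul_nonneg (hnn j) hlogM.le
  have hgsum : Summable (fun j => (if M ≤ j then p j else 0) * Real.log M) :=
    Summable.of_nonneg_of_le hnng key hent.neg
  have hle : ∑' j, (if M ≤ j then p j else 0) * Real.log M ≤ ∑' j, -(p j * Real.log (p j)) :=
    Summable.tsum_le_tsum key hgsum hent.neg
  -- compute the left tsum
  have hind : (fun j => if M ≤ j then p j else 0) =
      Set.indicator ((↑(Finset.range M) : Set ℕ)ᶜ) p := by
    funext j
    by_cases hj : M ≤ j <;>
      simp [Set.indicator, hj, Nat.lt_iff_add_one_le, Nat.not_lt.mpr, Nat.not_le.mp,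
        Finset.mem_range] <;> omega
  have htail : ∑' j, (if M ≤ j then p j else 0) = 1 - ∑ j ∈ Finset.range M, p j := by
    have hc := Summable.sum_add_tsum_compl (s := Finset.range M) hsummp
    rw [hsum.tsum_eq] at hc
    rw [hind, ← tsum_subtype]
    linarith
  have hleft : ∑' j, (if M ≤ j then p j else 0) * Real.log M
      = (1 - ∑ j ∈ Finset.range M, p j) * Real.log M := by
    rw [tsum_mul_right, htail]
  have hright : ∑' j, -(p j * Real.log (p j)) = -∑' j, p j * Real.log (p j) := tsum_neg
  rw [hleft, hright] at hle
  have h2 := (le_div_iff₀ hlogM).mpr hle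
  linarith
end

section
/- Let |ψ⟩ be a unit vector in a bipartite Hilbert space H_A ⊗ H_B with Schmidt decomposition |ψ⟩ = ∑_j √p_j |j⟩_A ⊗ |j⟩_B, where p_1 ≥ p_2 ≥ ⋯ ≥ 0 sum to 1 and the entanglement entropy S = −∑_j p_j log p_j is finite. For M ≥ 2, let P_M be the orthogonal projector onto the span of |1⟩_A, …, |M⟩_A and |ψ_M⟩ = (P_M ⊗ I)|ψ⟩ / ‖(P_M ⊗ I)|ψ⟩‖. Then |⟨ψ|ψ_M⟩|² = ∑_{j=1}^M p_j ≥ 1 − S/log M. -/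
open scoped BigOperators InnerProductSpace

/-- Let `|ψ⟩ = ∑_j √p_j |j⟩_A ⊗ |j⟩_B` be a unit vector in a
bipartite Hilbert space with ordered Schmidt coefficients `p` summing to `1`
and finite entanglement entropy `S = −∑_j p_j log p_j`. The Schmidt vectors
`|j⟩_A ⊗ |j⟩_B` form an orthonormal family `u` of the tensor-product Hilbert
space `E`. For `M ≥ 2`, the normalized truncation
`|ψ_M⟩ = (P_M ⊗ I)|ψ⟩/‖(P_M ⊗ I)|ψ⟩‖ = (∑_{j<M} √p_j u j)/(∑_{j<M} p_j)^{1/2}`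
satisfies `|⟨ψ|ψ_M⟩|² = ∑_{j<M} p_j ≥ 1 − S/log M`. -/
theorem schmidt_truncation_fidelity
    {E : Type*} [NormedAddCommGroup E] [InnerProductSpace ℂ E] [CompleteSpace E]
    (u : ℕ → E) (hu : Orthonormal ℂ u)
    (p : ℕ → ℝ) (M : ℕ) (hM : 2 ≤ M)
    (hnn : ∀ j, 0 ≤ p j) (hmono : Antitone p) (hsum : HasSum p 1)
    (hent : Summable (fun j => p j * Real.log (p j)))
    (hpos : 0 < ∑ j ∈ Finset.range M, p j)
    (ψ ψM : E)
    (hψ : ψ = ∑' j, (Real.sqrt (p j) : ℂ) • u j)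
    (hψM : ψM = (Real.sqrt (∑ j ∈ Finset.range M, p j) : ℂ)⁻¹ •
        ∑ j ∈ Finset.range M, (Real.sqrt (p j) : ℂ) • u j) :
    ‖⟪ψ, ψM⟫_ℂ‖ ^ 2 = ∑ j ∈ Finset.range M, p j
    ∧ 1 - (-∑' j, p j * Real.log (p j)) / Real.log M ≤ ∑ j ∈ Finset.range M, p j := by
  set P := ∑ j ∈ Finset.range M, p j with hP
  -- summability of the vector series
  have hsummable : Summable (fun i => (Real.sqrt (p i) : ℂ) • u i) := by
    have := (hu.orthogonalFamily.summable_iff_norm_sq_summable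
      (fun i => (Real.sqrt (p i) : ℂ)))
    simp only [LinearIsometry.toSpanSingleton_apply] at this
    rw [this]
    have : (fun i => ‖(Real.sqrt (p i) : ℂ)‖ ^ 2) = p := by
      funext i
      simp [Complex.norm_real, abs_of_nonneg (Real.sqrt_nonneg _),
        Real.sq_sqrt (hnn i)]
    rw [this]
    exact hsum.summable
  -- inner products with basis vectors
  have hinner : ∀ j, ⟪u j, ψ⟫_ℂ = (Real.sqrt (p j) : ℂ) := by
    intro j
    rw [hψ]
    have h := (hsummable.hasSum.mapL (innerSL ℂ (u j))).tsum_eq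
    simp only [innerSL_apply_apply] at h
    rw [← h]
    have : ∀ i, ⟪u j, (Real.sqrt (p i) : ℂ) • u i⟫_ℂ
        = if i = j then (Real.sqrt (p j) : ℂ) else 0 := by
      intro i
      rw [inner_smul_right]
      by_cases h : i = j
      · subst h; simp [hu.1 i, inner_self_eq_norm_sq_to_K]
      · simp [hu.2 (Ne.symm h), h]
    calc (∑' i, ⟪u j, (Real.sqrt (p i) : ℂ) • u i⟫_ℂ)
        = ∑' i, (if i = j then (Real.sqrt (p j) : ℂ) else 0) := by
          exact tsum_congr this
      _ = (Real.sqrt (p j) : ℂ) := by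
          rw [tsum_eq_single j (by intro b hb; simp [hb])]; simp
  -- the inner product
  have hip : ⟪ψ, ψM⟫_ℂ = (Real.sqrt P : ℂ) := by
    rw [hψM, inner_smul_right, inner_sum]
    have : ∀ j ∈ Finset.range M,
        ⟪ψ, (Real.sqrt (p j) : ℂ) • u j⟫_ℂ = (p j : ℂ) := by
      intro j _
      rw [inner_smul_right, ← inner_conj_symm, hinner j, Complex.conj_ofReal,
        ← Complex.ofReal_mul, Real.mul_self_sqrt (hnn j)]
    rw [Finset.sum_congr rfl this]
    push_cast
    rw [← Complex.ofReal_sum]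
    rw [show ((Real.sqrt P : ℂ))⁻¹ * (P : ℂ) = (Real.sqrt P : ℂ) by
      rw [← Complex.ofReal_inv, ← Complex.ofReal_mul]
      congr 1
      rw [inv_mul_eq_div, ← Real.sqrt_mul_self hpos.le]
      field_simp
      rw [Real.sq_sqrt (Real.sqrt_nonneg _)]]
  constructor
  · rw [hip]
    rw [Complex.norm_real, Real.norm_eq_abs, abs_of_nonneg (Real.sqrt_nonneg _),
      Real.sq_sqrt hpos.le]
  -- entropy bound
  · have hlogM : 0 < Real.log M := by
      apply Real.log_pos
      exact_mod_cast lt_of_lt_of_le one_lt_two (by exact_mod_cast hM)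
    have hp1 : ∀ j, p j ≤ 1 := by
      intro j
      have := sum_le_hasSum {j} (fun i _ => hnn i) hsum
      simpa using this
    have hpM : p M ≤ 1 / M := by
      rw [le_div_iff₀ (by positivity : (0:ℝ) < (M:ℝ)), mul_comm]
      calc (M : ℝ) * p M = ∑ j ∈ Finset.range M, p M := by
            simp [Finset.sum_const, mul_comm]
        _ ≤ ∑ j ∈ Finset.range M, p j :=
            Finset.sum_le_sum fun j hj => hmono (Finset.mem_range.mp hj).le
        _ ≤ 1 := sum_le_hasSum _ (fun i _ => hnn i) hsum
    -- tail sums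
    have htail : ∑ i ∈ Finset.range M, p i + ∑' i, p (i + M) = 1 := by
      rw [Summable.sum_add_tsum_nat_add M hsum.summable, hsum.tsum_eq]
    have hterm : ∀ i, Real.log M * p (i + M) ≤ -(p (i + M) * Real.log (p (i + M))) := by
      intro i
      rcases eq_or_lt_of_le (hnn (i + M)) with h | h
      · simp [← h]
      · have hle : p (i + M) ≤ 1 / M := le_trans (hmono (Nat.le_add_left M i)) hpM
        have : Real.log (p (i + M)) ≤ Real.log (1 / M) :=
          Real.log_le_log h hle
        rw [Real.log_div one_ne_zero (by positivity), Real.log_one, zero_sub] at this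
        nlinarith [this, h]
    have hsumtail : Summable (fun i => p (i + M)) :=
      (summable_nat_add_iff M).mpr hsum.summable
    have hsument : Summable (fun i => -(p (i + M) * Real.log (p (i + M)))) :=
      ((summable_nat_add_iff M).mpr hent).neg
    have h1 : Real.log M * ∑' i, p (i + M)
        ≤ ∑' i, -(p (i + M) * Real.log (p (i + M))) := by
      rw [← tsum_mul_left]
      exact Summable.tsum_le_tsum hterm (hsumtail.mul_left _) hsument
    have h2 : ∑' i, -(p (i + M) * Real.log (p (i + M)))
        ≤ -∑' j, p j * Real.log (p j) := by
      rw [← tsum_neg]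
      have := Summable.sum_add_tsum_nat_add M (f := fun j => -(p j * Real.log (p j))) hent.neg
      rw [← this]
      have hfin : 0 ≤ ∑ i ∈ Finset.range M, -(p i * Real.log (p i)) := by
        apply Finset.sum_nonneg
        intro i _
        have : Real.log (p i) ≤ 0 := Real.log_nonpos (hnn i) (hp1 i)
        nlinarith [hnn i]
      linarith
    have htailval : ∑' i, p (i + M) = 1 - P := by linarith
    rw [htailval] at h1
    have : Real.log M * (1 - P) ≤ -∑' j, p j * Real.log (p j) := le_trans h1 h2
    have h3 : 1 - P ≤ (-∑' j, p j * Real.log (p j)) / Real.log M := by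
      rw [le_div_iff₀ hlogM]; nlinarith [this]
    linarith
end

section
/- Smooth entropy reformulation: for any probability distribution p on a countable set and any ε ∈ (0,1), ε · H_0^ε(p) ≤ H(p), where H_0^ε(p) = min{ log|supp q| : q a subnormalized distribution with ∑_j min(p_j,q_j) ≥ 1−ε, q ≤ p } is realized in particular by keeping the M = ⌈exp(H(p)/ε)⌉ largest entries of p. -/
open scoped BigOperators

/-- Smooth entropy reformulation `ε·H₀^ε(p) ≤ H(p)`. For a
probability mass function `p` on ℕ with finite Shannon entropy
`H(p) = −∑' j, p j log (p j)` (entries ordered non-increasingly) and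
`ε ∈ (0,1)`, keeping the top `M = ⌈exp(H(p)/ε)⌉` entries of `p` yields a
subnormalized distribution `q ≤ p` of support size `M` with
`∑_{j<M} p j ≥ 1 − ε`; hence the smoothed max-entropy satisfies
`H₀^ε(p) ≤ log M ≤ H(p)/ε + 1`. -/
theorem smooth_entropy_bound
    (p : ℕ → ℝ) (ε : ℝ) (hε0 : 0 < ε) (hε1 : ε < 1)
    (hnn : ∀ j, 0 ≤ p j)
    (hmono : Antitone p)
    (hsum : HasSum p 1)
    (hent : Summable (fun j => p j * Real.log (p j))) :
    1 - ε ≤ ∑ j ∈ Finset.range ⌈Real.exp ((-∑' j, p j * Real.log (p j)) / ε)⌉₊, p j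
    ∧ Real.log (⌈Real.exp ((-∑' j, p j * Real.log (p j)) / ε)⌉₊ : ℝ)
        ≤ (-∑' j, p j * Real.log (p j)) / ε + 1 := by
  set H : ℝ := -∑' j, p j * Real.log (p j) with hH
  have hple1 : ∀ j, p j ≤ 1 := by
    intro j
    have := sum_le_hasSum {j} (fun i _ => hnn i) hsum
    simpa using this
  have hterm : ∀ j, p j * Real.log (p j) ≤ 0 := by
    intro j
    rcases eq_or_lt_of_le (hnn j) with h | h
    · simp [← h]
    · exact mul_nonpos_of_nonneg_of_nonpos (hnn j) (Real.log_nonpos (hnn j) (hple1 j))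
  have hHnn : 0 ≤ H := by
    rw [hH]
    simpa using neg_nonneg.mpr (tsum_nonpos hterm)
  set M : ℕ := ⌈Real.exp (H / ε)⌉₊ with hM
  have hMge : Real.exp (H / ε) ≤ (M : ℝ) := Nat.le_ceil _
  have hM1 : 1 ≤ M := Nat.one_le_ceil_iff.mpr (Real.exp_pos _)
  have hexp1 : 1 ≤ Real.exp (H / ε) := Real.one_le_exp (div_nonneg hHnn hε0.le)
  -- second part
  have hlogM : Real.log (M : ℝ) ≤ H / ε + 1 := by
    rw [Real.log_le_iff_le_exp (by exact_mod_cast hM1 : (0:ℝ) < M)]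
    have hceil : (M : ℝ) < Real.exp (H / ε) + 1 :=
      Nat.ceil_lt_add_one (Real.exp_pos _).le
    have h2 : (2:ℝ) ≤ Real.exp 1 := by
      have := Real.add_one_le_exp (1:ℝ); linarith
    have : Real.exp (H / ε + 1) = Real.exp (H / ε) * Real.exp 1 := Real.exp_add _ _
    nlinarith [Real.exp_pos (H / ε)]
  refine ⟨?_, hlogM⟩
  -- pointwise bound p j ≤ 1/(j+1)
  have hpj : ∀ j : ℕ, p j ≤ 1 / ((j : ℝ) + 1) := by
    intro j
    have hs : ∑ i ∈ Finset.range (j + 1), p j ≤ ∑ i ∈ Finset.range (j + 1), p i :=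
      Finset.sum_le_sum (fun i hi => hmono (Nat.le_of_lt_succ (Finset.mem_range.mp hi)))
    have h2 := sum_le_hasSum (Finset.range (j + 1)) (fun i _ => hnn i) hsum
    have h3 : ((j : ℝ) + 1) * p j ≤ 1 := by
      have := hs.trans h2
      simpa [Finset.sum_const, nsmul_eq_mul, Nat.cast_add_one] using this
    rw [le_div_iff₀ (by positivity)]
    linarith
  rcases eq_or_lt_of_le hHnn with hH0 | hHpos
  · -- H = 0 : p 0 = 1
    have hall : ∀ j, -(p j * Real.log (p j)) = 0 := by
      intro j
      have hg : Summable (fun j => -(p j * Real.log (p j))) := hent.neg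
      have hle := Summable.le_tsum hg j (fun i _ => neg_nonneg.mpr (hterm i))
      have htsum : ∑' j, -(p j * Real.log (p j)) = 0 := by
        rw [tsum_neg]; rw [hH] at hH0; linarith
      have := neg_nonneg.mpr (hterm j)
      rw [htsum] at hle
      linarith
    have h01 : ∀ j, p j = 0 ∨ p j = 1 := by
      intro j
      have hml : p j * Real.log (p j) = 0 := by linarith [hall j]
      rcases mul_eq_zero.mp hml with h | h
      · exact Or.inl h
      · rcases Real.log_eq_zero.mp h with h | h | h
        · exact Or.inl h
        · exact Or.inr h
        · exfalso; linarith [hnn j]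
    have hp0 : p 0 = 1 := by
      rcases h01 0 with h | h
      · exfalso
        have hz : ∀ j, p j = 0 := fun j => le_antisymm (h ▸ hmono (Nat.zero_le j)) (hnn j)
        have : p = fun _ => (0:ℝ) := funext hz
        rw [this] at hsum
        simpa using hsum.tsum_eq.symm.trans tsum_zero
      · exact h
    have hle : p 0 ≤ ∑ j ∈ Finset.range M, p j :=
      Finset.single_le_sum (fun i _ => hnn i) (Finset.mem_range.mpr hM1)
    linarith
  · -- H > 0
    have hdiv : 0 < H / ε := div_pos hHpos hε0
    have hshiftp : Summable (fun j => p (j + M)) := (summable_nat_add_iff M).mpr hsum.summable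
    have hg : Summable (fun j => -(p j * Real.log (p j))) := hent.neg
    have hgshift : Summable (fun j => -(p (j + M) * Real.log (p (j + M)))) :=
      (summable_nat_add_iff M).mpr hg
    have key : ∀ j : ℕ, (H / ε) * p (j + M) ≤ -(p (j + M) * Real.log (p (j + M))) := by
      intro j
      rcases eq_or_lt_of_le (hnn (j + M)) with h | hpos
      · simp [← h]
      · have h2 : (M : ℝ) ≤ ((j + M : ℕ) : ℝ) := by exact_mod_cast Nat.le_add_left M j
        have hlt : p (j + M) < Real.exp (-(H / ε)) := by
          calc p (j + M) ≤ 1 / (((j + M : ℕ) : ℝ) + 1) := hpj _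
            _ < 1 / Real.exp (H / ε) := by
                apply one_div_lt_one_div_of_lt (Real.exp_pos _); linarith
            _ = Real.exp (-(H / ε)) := by rw [Real.exp_neg, one_div]
        have hlog : Real.log (p (j + M)) ≤ -(H / ε) := by
          calc Real.log (p (j + M)) ≤ Real.log (Real.exp (-(H / ε))) :=
                Real.log_le_log hpos hlt.le
            _ = -(H / ε) := Real.log_exp _
        nlinarith [hpos.le]
    have hchain : (H / ε) * (∑' j, p (j + M)) ≤ ∑' j, -(p (j + M) * Real.log (p (j + M))) := by
      rw [← tsum_mul_left]
      exact Summable.tsum_le_tsum key (hshiftp.mul_left _) hgshift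
    have htail_le : ∑' j, -(p (j + M) * Real.log (p (j + M))) ≤ H := by
      have hsplitg := Summable.sum_add_tsum_nat_add M hg
      have hHeq : ∑' j, -(p j * Real.log (p j)) = H := by rw [tsum_neg, hH]
      have hsnn : 0 ≤ ∑ j ∈ Finset.range M, -(p j * Real.log (p j)) :=
        Finset.sum_nonneg (fun j _ => neg_nonneg.mpr (hterm j))
      linarith [hsplitg.symm ▸ hHeq]
    have hT : ∑' j, p (j + M) ≤ ε := by
      have hHe : H = (H / ε) * ε := by field_simp
      have : (H / ε) * (∑' j, p (j + M)) ≤ (H / ε) * ε := by linarith [hchain, htail_le]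
      exact le_of_mul_le_mul_left this hdiv
    have hsplit := Summable.sum_add_tsum_nat_add M hsum.summable
    rw [hsum.tsum_eq] at hsplit
    linarith
end

section
/- Symplectic eigenvalue interlacing: let A ∈ ℝ^{2n×2n} be positive definite, partitioned into four n×n blocks A_{11}, A_{12}, A_{21}, A_{22}, and let B ∈ ℝ^{(2n−2)×(2n−2)} be obtained by deleting, for some 1 ≤ i ≤ n, the i-th and (n+i)-th rows and columns of A. Then the non-decreasingly ordered symplectic eigenvalues satisfy d_j^↑(A) ≤ d_j^↑(B) ≤ d_{j+2}^↑(A) for 1 ≤ j ≤ n−1, with the convention d_{n+1}^↑(A) = ∞. -/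
open scoped BigOperators Matrix
open Matrix Complex

/-- `d : Fin n → ℝ` is a (Williamson) symplectic spectrum of a matrix
`M : Matrix (Fin n ⊕ Fin n) (Fin n ⊕ Fin n) ℝ` if there is a symplectic matrix
`S` with `S M Sᵀ = diag(d₁,…,dₙ,d₁,…,dₙ)`. -/
def IsSymplecticSpectrum {n : ℕ}
    (M : Matrix (Fin n ⊕ Fin n) (Fin n ⊕ Fin n) ℝ) (d : Fin n → ℝ) : Prop :=
  ∃ S ∈ Matrix.symplecticGroup (Fin n) ℝ,
    S * M * Sᵀ = Matrix.diagonal (Sum.elim d d)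

namespace SEI

variable {m : ℕ}

/-- real quadratic form of a complex matrix -/
noncomputable def qf {ι : Type*} [Fintype ι] (M : Matrix ι ι ℂ) (z : ι → ℂ) : ℝ :=
  (dotProduct (star z) (M *ᵥ z)).re

lemma qf_mulVec {ι κ : Type*} [Fintype ι] [Fintype κ] (M : Matrix ι ι ℂ)
    (E : Matrix ι κ ℂ) (c : κ → ℂ) :
    qf M (E *ᵥ c) = qf (Eᴴ * M * E) c := by
  unfold qf
  rw [star_mulVec, mulVec_mulVec, dotProduct_mulVec, vecMul_vecMul, ← dotProduct_mulVec,
    Matrix.mul_assoc]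

lemma qf_diag {ι : Type*} [Fintype ι] [DecidableEq ι] (g : ι → ℝ) (c : ι → ℂ) :
    qf (Matrix.diagonal (fun l => (g l : ℂ))) c = ∑ l, g l * Complex.normSq (c l) := by
  unfold qf
  have : dotProduct (star c) ((Matrix.diagonal (fun l => (g l : ℂ))) *ᵥ c)
      = ((∑ l, g l * Complex.normSq (c l) : ℝ) : ℂ) := by
    rw [dotProduct]
    push_cast
    refine Finset.sum_congr rfl fun l _ => ?_
    simp only [mulVec_diagonal, Pi.star_apply, RCLike.star_def]
    rw [mul_comm ((starRingEnd ℂ) (c l)), mul_assoc, Complex.mul_conj']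
    simp [Complex.normSq_eq_norm_sq]
  rw [this, Complex.ofReal_re]

end SEI

namespace SEI2
open SEI

noncomputable def Qm (m : ℕ) : Matrix (Fin m ⊕ Fin m) (Fin m ⊕ Fin m) ℂ :=
  Matrix.fromBlocks 1 1 ((-Complex.I) • 1) (Complex.I • 1)

variable {m : ℕ}

lemma QHDQ (dc : Fin m → ℂ) :
    (Qm m)ᴴ * (Matrix.diagonal (Sum.elim dc dc)) * Qm m
      = Matrix.diagonal (Sum.elim (fun l => 2 * dc l) (fun l => 2 * dc l)) := by
  rw [Qm, ← fromBlocks_diagonal, fromBlocks_conjTranspose,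
    fromBlocks_multiply, fromBlocks_multiply]
  ext (a | a) (b | b) <;>
    simp [Matrix.smul_mul, Matrix.mul_smul, smul_smul, Complex.I_mul_I,
      Matrix.diagonal_apply, Matrix.one_apply] <;>
    try split <;> ring

lemma QHJQ : (Qm m)ᴴ * (Complex.I • Matrix.J (Fin m) ℂ) * Qm m
    = Matrix.diagonal (Sum.elim (fun _ => (-2:ℂ)) (fun _ => 2)) := by
  rw [Qm, Matrix.J, fromBlocks_conjTranspose, fromBlocks_smul,
    fromBlocks_multiply, fromBlocks_multiply]
  ext (a | a) (b | b) <;>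
    simp [Matrix.smul_mul, Matrix.mul_smul, smul_smul, Complex.I_mul_I,
      Matrix.diagonal_apply, Matrix.one_apply] <;>
    try split <;> ring

lemma QQH : Qm m * (Qm m)ᴴ = (2:ℂ) • 1 := by
  rw [Qm, fromBlocks_conjTranspose, fromBlocks_multiply, ← fromBlocks_one, fromBlocks_smul]
  congr 1 <;>
    simp [Matrix.smul_mul, Matrix.mul_smul, smul_smul, Complex.I_mul_I, two_smul]

lemma QHQ : (Qm m)ᴴ * Qm m = (2:ℂ) • 1 := by
  rw [Qm, fromBlocks_conjTranspose, fromBlocks_multiply, ← fromBlocks_one, fromBlocks_smul]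
  congr 1 <;>
    simp [Matrix.smul_mul, Matrix.mul_smul, smul_smul, Complex.I_mul_I, two_smul]

end SEI2

namespace SEI3
open SEI SEI2

variable {m : ℕ}

/-- complexification -/
noncomputable def cm {ι κ : Type*} (M : Matrix ι κ ℝ) : Matrix ι κ ℂ :=
  M.map (Complex.ofRealHom : ℝ →+* ℂ)

lemma cm_mul {ι κ τ : Type*} [Fintype κ] (M : Matrix ι κ ℝ) (N : Matrix κ τ ℝ) :
    cm (M * N) = cm M * cm N := by
  simp [cm, Matrix.map_mul]

lemma cm_transpose {ι κ : Type*} (M : Matrix ι κ ℝ) : cm (Mᵀ) = (cm M)ᵀ := rfl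

lemma cm_conjTranspose {ι κ : Type*} (M : Matrix ι κ ℝ) : (cm M)ᴴ = cm (Mᵀ) := by
  ext a b
  simp [cm, Matrix.conjTranspose_apply, Complex.conj_ofReal]

lemma cm_J : cm (Matrix.J (Fin m) ℝ) = Matrix.J (Fin m) ℂ := by
  ext (a | a) (b | b) <;>
    simp [cm, Matrix.J, Matrix.one_apply, apply_ite]

lemma cm_diagonal {ι : Type*} [DecidableEq ι] (g : ι → ℝ) :
    cm (Matrix.diagonal g) = Matrix.diagonal (fun l => (g l : ℂ)) := by
  simp [cm, Matrix.diagonal_map]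

section Ekey

variable (S M : Matrix (Fin m ⊕ Fin m) (Fin m ⊕ Fin m) ℝ) (d : Fin m → ℝ)

/-- the eigenbasis matrix -/
noncomputable def Em (S : Matrix (Fin m ⊕ Fin m) (Fin m ⊕ Fin m) ℝ) :
    Matrix (Fin m ⊕ Fin m) (Fin m ⊕ Fin m) ℂ :=
  (cm S)ᵀ * Qm m

lemma EmH (S : Matrix (Fin m ⊕ Fin m) (Fin m ⊕ Fin m) ℝ) :
    (Em S)ᴴ = (Qm m)ᴴ * cm S := by
  rw [Em, Matrix.conjTranspose_mul, ← cm_transpose, cm_conjTranspose, Matrix.transpose_transpose]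

lemma E1 (hSA : S * M * Sᵀ = Matrix.diagonal (Sum.elim d d)) :
    (Em S)ᴴ * cm M * Em S
      = Matrix.diagonal (fun l => ((2 * Sum.elim d d l : ℝ) : ℂ)) := by
  rw [EmH, Em]
  have : (Qm m)ᴴ * cm S * cm M * ((cm S)ᵀ * Qm m)
      = (Qm m)ᴴ * cm (S * M * Sᵀ) * Qm m := by
    rw [cm_mul, cm_mul, cm_transpose]
    noncomm_ring
  rw [this, hSA, cm_diagonal]
  have h2 : Matrix.diagonal (fun l => ((Sum.elim d d) l : ℂ))
      = Matrix.diagonal (Sum.elim (fun l => ((d l : ℝ) : ℂ)) (fun l => ((d l : ℝ) : ℂ))) := by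
    congr 1; funext l; cases l <;> rfl
  rw [h2, QHDQ]
  have h3 : (Sum.elim (fun l => 2 * ((d l : ℝ) : ℂ)) (fun l => 2 * ((d l : ℝ) : ℂ)))
      = fun l => ((2 * Sum.elim d d l : ℝ) : ℂ) := by
    funext l; cases l <;> simp <;> push_cast <;> ring
  rw [h3]

lemma E2 (hS : S ∈ Matrix.symplecticGroup (Fin m) ℝ) :
    (Em S)ᴴ * (Complex.I • Matrix.J (Fin m) ℂ) * Em S
      = Matrix.diagonal (fun l =>
          ((2 * Sum.elim (fun _ => (-1:ℝ)) (fun _ => (1:ℝ)) l : ℝ) : ℂ)) := by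
  rw [EmH, Em]
  have hJ : S * Matrix.J (Fin m) ℝ * Sᵀ = Matrix.J (Fin m) ℝ :=
    (SymplecticGroup.mem_iff).mp hS
  have : (Qm m)ᴴ * cm S * (Complex.I • Matrix.J (Fin m) ℂ) * ((cm S)ᵀ * Qm m)
      = (Qm m)ᴴ * (Complex.I • cm (S * Matrix.J (Fin m) ℝ * Sᵀ)) * Qm m := by
    rw [cm_mul, cm_mul, cm_transpose, cm_J]
    simp only [Matrix.mul_smul, Matrix.smul_mul, Matrix.mul_assoc]
  rw [this, hJ, cm_J, QHJQ]
  have h3 : (Sum.elim (fun _ => (-2:ℂ)) (fun _ => (2:ℂ)) : Fin m ⊕ Fin m → ℂ)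
      = fun l : Fin m ⊕ Fin m =>
          ((2 * Sum.elim (fun _ => (-1:ℝ)) (fun _ => (1:ℝ)) l : ℝ) : ℂ) := by
    funext l; cases l <;> simp <;> norm_num
  rw [h3]

end Ekey

end SEI3

namespace SEI4
open SEI SEI2 SEI3

variable {m : ℕ}

lemma isUnit_Qm : IsUnit (Qm m) := by
  have h : Qm m * ((2:ℂ)⁻¹ • (Qm m)ᴴ) = 1 := by
    rw [Matrix.mul_smul, QQH, smul_smul]; norm_num
  have h' : ((2:ℂ)⁻¹ • (Qm m)ᴴ) * Qm m = 1 := by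
    rw [Matrix.smul_mul, QHQ, smul_smul]; norm_num
  exact ⟨⟨Qm m, (2:ℂ)⁻¹ • (Qm m)ᴴ, h, h'⟩, rfl⟩

lemma isUnit_Em {S : Matrix (Fin m ⊕ Fin m) (Fin m ⊕ Fin m) ℝ}
    (hS : S ∈ Matrix.symplecticGroup (Fin m) ℝ) : IsUnit (Em S) := by
  refine IsUnit.mul ?_ isUnit_Qm
  have hdet : IsUnit S.det := SymplecticGroup.symplectic_det hS
  have hd2 : IsUnit ((cm S)ᵀ).det := by
    rw [Matrix.det_transpose]
    have hcd : (cm S).det = ((S.det : ℝ) : ℂ) := by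
      rw [cm]
      have := (RingHom.map_det (Complex.ofRealHom) S).symm
      simpa [RingHom.mapMatrix_apply] using this
    rw [hcd, isUnit_iff_ne_zero, ne_eq, Complex.ofReal_eq_zero]
    exact fun h => by simp [isUnit_iff_ne_zero, h] at hdet
  exact (Matrix.isUnit_iff_isUnit_det _).mpr hd2

lemma mulVec_Em_injective {S : Matrix (Fin m ⊕ Fin m) (Fin m ⊕ Fin m) ℝ}
    (hS : S ∈ Matrix.symplecticGroup (Fin m) ℝ) :
    Function.Injective ((Em S).mulVec) :=
  Matrix.mulVec_injective_iff_isUnit.mpr (isUnit_Em hS)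

/-- coordinate-supported subspace -/
noncomputable def supp {ι : Type*} [Fintype ι] [DecidableEq ι] (T : Finset ι) :
    Submodule ℂ (ι → ℂ) :=
  Submodule.span ℂ ((fun l => (Pi.single l 1 : ι → ℂ)) '' (T : Set ι))

lemma finrank_supp {ι : Type*} [Fintype ι] [DecidableEq ι] (T : Finset ι) :
    Module.finrank ℂ (supp T) = T.card := by
  have hli : LinearIndependent ℂ (fun l : (T : Set ι) => (Pi.single (l : ι) 1 : ι → ℂ)) := by
    have h2 := (Pi.basisFun ℂ ι).linearIndependent.comp
      (fun l : (T : Set ι) => (l : ι)) Subtype.val_injective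
    have heq : (fun l : (T : Set ι) => (Pi.single (l : ι) 1 : ι → ℂ))
        = (⇑(Pi.basisFun ℂ ι) ∘ fun l : (T : Set ι) => (l : ι)) :=
      funext fun l => by simp
    rw [heq]; exact h2
  have hr := finrank_span_eq_card hli
  have him : Set.range (fun l : (T : Set ι) => (Pi.single (l : ι) 1 : ι → ℂ))
      = (fun l => (Pi.single l 1 : ι → ℂ)) '' (T : Set ι) := by
    ext x; simp [Set.mem_image, Set.mem_range]
  rw [supp, ← him, hr]
  simp

lemma supp_apply_eq_zero {ι : Type*} [Fintype ι] [DecidableEq ι] {T : Finset ι}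
    {x : ι → ℂ} (hx : x ∈ supp T) {l : ι} (hl : l ∉ T) : x l = 0 := by
  induction hx using Submodule.span_induction with
  | mem y hy =>
      obtain ⟨a, ha, rfl⟩ := hy
      exact Pi.single_eq_of_ne (fun h => hl (by rw [h]; exact Finset.mem_coe.mp ha)) 1
  | zero => rfl
  | add y z _ _ hy hz => simp [hy, hz]
  | smul c y _ hy => simp [hy]

lemma inter_nontrivial {ι : Type*} [Fintype ι] (V U : Submodule ℂ (ι → ℂ))
    (h : Fintype.card ι < Module.finrank ℂ V + Module.finrank ℂ U) :
    ∃ z, z ∈ V ⊓ U ∧ z ≠ 0 := by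
  have h1 := Submodule.finrank_sup_add_finrank_inf_eq V U
  have h2 : Module.finrank ℂ ↥(V ⊔ U) ≤ Fintype.card ι := by
    have := Submodule.finrank_le (V ⊔ U)
    rwa [Module.finrank_pi ℂ] at this
  have h3 : 0 < Module.finrank ℂ ↥(V ⊓ U) := by omega
  have : Nontrivial ↥(V ⊓ U) := Module.finrank_pos_iff.mp h3
  obtain ⟨x, hx⟩ := exists_ne (0 : ↥(V ⊓ U))
  exact ⟨↑x, x.2, fun h0 => hx (Subtype.ext h0)⟩

end SEI4

namespace SEI5
open SEI SEI2 SEI3 SEI4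

variable {m : ℕ}

lemma conjTranspose_eq_transpose_real {ι κ : Type*} (C : Matrix ι κ ℝ) : Cᴴ = Cᵀ := by
  ext a b; simp [Matrix.conjTranspose_apply]

lemma posDef_conj_real {ι κ : Type*} [Fintype ι] [Fintype κ]
    {M : Matrix ι ι ℝ} (hM : M.PosDef) (C : Matrix ι κ ℝ)
    (hker : ∀ x : κ → ℝ, C *ᵥ x = 0 → x = 0) : (Cᵀ * M * C).PosDef := by
  rw [Matrix.posDef_iff_dotProduct_mulVec]
  constructor
  · have h1 : (Cᵀ * M * C)ᴴ = Cᴴ * Mᴴ * (Cᵀ)ᴴ := by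
      rw [Matrix.conjTranspose_mul, Matrix.conjTranspose_mul, Matrix.mul_assoc]
    rw [Matrix.IsHermitian, h1, hM.1.eq, conjTranspose_eq_transpose_real,
      conjTranspose_eq_transpose_real, Matrix.transpose_transpose]
  · intro x hx
    have hy : C *ᵥ x ≠ 0 := fun h => hx (hker x h)
    have := (Matrix.posDef_iff_dotProduct_mulVec.mp hM).2 hy
    have hq : star x ⬝ᵥ (Cᵀ * M * C) *ᵥ x = star (C *ᵥ x) ⬝ᵥ M *ᵥ (C *ᵥ x) := by
      have hsx : star x = x := by funext a; simp
      have hsy : star (C *ᵥ x) = C *ᵥ x := by funext a; simp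
      rw [hsx, hsy]
      rw [← Matrix.mulVec_mulVec, ← Matrix.mulVec_mulVec, Matrix.dotProduct_mulVec,
        Matrix.vecMul_transpose]
    rwa [hq]

lemma dpos {M : Matrix (Fin m ⊕ Fin m) (Fin m ⊕ Fin m) ℝ} (hM : M.PosDef)
    {S : Matrix (Fin m ⊕ Fin m) (Fin m ⊕ Fin m) ℝ} {d : Fin m → ℝ}
    (hS : S ∈ Matrix.symplecticGroup (Fin m) ℝ)
    (hSA : S * M * Sᵀ = Matrix.diagonal (Sum.elim d d)) : ∀ l, 0 < d l := by
  have hSu : IsUnit Sᵀ.det := by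
    rw [Matrix.det_transpose]; exact SymplecticGroup.symplectic_det hS
  have hker : ∀ x : (Fin m ⊕ Fin m) → ℝ, Sᵀ *ᵥ x = 0 → x = 0 := by
    intro x hx
    have hinj : Function.Injective (Sᵀ.mulVec) :=
      Matrix.mulVec_injective_iff_isUnit.mpr ((Matrix.isUnit_iff_isUnit_det _).mpr hSu)
    have : Sᵀ *ᵥ x = Sᵀ *ᵥ 0 := by simpa [Matrix.mulVec_zero] using hx
    exact hinj this
  have hpd : (Matrix.diagonal (Sum.elim d d)).PosDef := by
    rw [← hSA]
    have h := posDef_conj_real hM Sᵀ hker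
    rwa [Matrix.transpose_transpose] at h
  intro l
  have := Matrix.posDef_diagonal_iff.mp hpd (Sum.inl l)
  simpa using this

/-- The key construction: for a symplectically diagonalized positive matrix,
two subspaces witnessing upper/lower bounds for the generalized Rayleigh quotient. -/
theorem key {M : Matrix (Fin m ⊕ Fin m) (Fin m ⊕ Fin m) ℝ} (hM : M.PosDef)
    {d : Fin m → ℝ} (hspec : IsSymplecticSpectrum M d) (hmono : Monotone d) (k : Fin m) :
    0 < d k ∧ ∃ V U : Submodule ℂ ((Fin m ⊕ Fin m) → ℂ),
      Module.finrank ℂ V = (k : ℕ) + 1 ∧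
      Module.finrank ℂ U = 2 * m - (k : ℕ) ∧
      (∀ z ∈ V, d k * qf (Complex.I • Matrix.J (Fin m) ℂ) z + qf (cm M) z ≤ 0) ∧
      (∀ z ∈ U, 0 ≤ d k * qf (Complex.I • Matrix.J (Fin m) ℂ) z + qf (cm M) z ∧
        (z ≠ 0 → 0 < qf (cm M) z)) := by
  obtain ⟨S, hS, hSA⟩ := hspec
  have hdp : ∀ l, 0 < d l := dpos hM hS hSA
  refine ⟨hdp k, ?_⟩
  have hinj : Function.Injective ⇑(Em S).mulVecLin := by
    rw [Matrix.coe_mulVecLin]; exact mulVec_Em_injective hS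
  -- quadratic forms in eigencoordinates
  have hqM : ∀ c : (Fin m ⊕ Fin m) → ℂ, qf (cm M) ((Em S) *ᵥ c)
      = ∑ l, (2 * Sum.elim d d l) * Complex.normSq (c l) := by
    intro c
    rw [qf_mulVec, E1 S M d hSA, qf_diag]
  have hqH : ∀ c : (Fin m ⊕ Fin m) → ℂ,
      qf (Complex.I • Matrix.J (Fin m) ℂ) ((Em S) *ᵥ c)
      = ∑ l, (2 * Sum.elim (fun _ => (-1:ℝ)) (fun _ => (1:ℝ)) l) * Complex.normSq (c l) := by
    intro c
    rw [qf_mulVec, E2 S hS, qf_diag]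
  have hcomb : ∀ c : (Fin m ⊕ Fin m) → ℂ,
      d k * qf (Complex.I • Matrix.J (Fin m) ℂ) ((Em S) *ᵥ c) + qf (cm M) ((Em S) *ᵥ c)
      = ∑ l, (d k * (2 * Sum.elim (fun _ => (-1:ℝ)) (fun _ => (1:ℝ)) l)
            + 2 * Sum.elim d d l) * Complex.normSq (c l) := by
    intro c
    rw [hqM c, hqH c, Finset.mul_sum, ← Finset.sum_add_distrib]
    refine Finset.sum_congr rfl fun l _ => ?_
    ring
  set TV : Finset (Fin m ⊕ Fin m) := (Finset.Iic k).image Sum.inl with hTV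
  set TU : Finset (Fin m ⊕ Fin m) :=
    ((Finset.Ici k).image Sum.inl) ∪ (Finset.univ.image Sum.inr) with hTU
  refine ⟨(supp TV).map (Em S).mulVecLin, (supp TU).map (Em S).mulVecLin, ?_, ?_, ?_, ?_⟩
  · rw [← LinearEquiv.finrank_eq (Submodule.equivMapOfInjective _ hinj (supp TV)),
      finrank_supp, hTV, Finset.card_image_of_injective _ Sum.inl_injective, Fin.card_Iic]
  · rw [← LinearEquiv.finrank_eq (Submodule.equivMapOfInjective _ hinj (supp TU)),
      finrank_supp, hTU]
    rw [Finset.card_union_of_disjoint (by simp [Finset.disjoint_left]),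
      Finset.card_image_of_injective _ Sum.inl_injective,
      Finset.card_image_of_injective _ Sum.inr_injective, Fin.card_Ici,
      Finset.card_univ, Fintype.card_fin]
    omega
  · rintro z hz
    obtain ⟨c, hc, rfl⟩ := Submodule.mem_map.mp hz
    rw [Matrix.mulVecLin_apply, hcomb c]
    refine Finset.sum_nonpos fun l _ => ?_
    rcases l with a | a
    · by_cases ha : a ≤ k
      · have hcoef : d k * (2 * Sum.elim (fun _ => (-1:ℝ)) (fun _ => (1:ℝ)) ((Sum.inl a) : Fin m ⊕ Fin m))
            + 2 * Sum.elim d d ((Sum.inl a) : Fin m ⊕ Fin m) = 2 * (d a - d k) := by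
          simp; ring
        rw [hcoef]
        have : d a - d k ≤ 0 := sub_nonpos.mpr (hmono ha)
        have h2 : (2:ℝ) * (d a - d k) ≤ 0 := by linarith
        exact mul_nonpos_of_nonpos_of_nonneg h2 (Complex.normSq_nonneg _)
      · have : c (Sum.inl a) = 0 := by
          refine supp_apply_eq_zero hc ?_
          simp [hTV, ha]
        rw [this]
        simp
    · have : c (Sum.inr a) = 0 := by
        refine supp_apply_eq_zero hc ?_
        simp [hTV]
      rw [this]
      simp
  · rintro z hz
    obtain ⟨c, hc, rfl⟩ := Submodule.mem_map.mp hz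
    rw [Matrix.mulVecLin_apply]
    constructor
    · rw [hcomb c]
      refine Finset.sum_nonneg fun l _ => ?_
      rcases l with a | a
      · by_cases ha : k ≤ a
        · have hcoef : d k * (2 * Sum.elim (fun _ => (-1:ℝ)) (fun _ => (1:ℝ)) ((Sum.inl a) : Fin m ⊕ Fin m))
              + 2 * Sum.elim d d ((Sum.inl a) : Fin m ⊕ Fin m) = 2 * (d a - d k) := by
            simp; ring
          rw [hcoef]
          have : 0 ≤ d a - d k := sub_nonneg.mpr (hmono ha)
          have h2 : (0:ℝ) ≤ 2 * (d a - d k) := by linarith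
          exact mul_nonneg h2 (Complex.normSq_nonneg _)
        · have : c (Sum.inl a) = 0 := by
            refine supp_apply_eq_zero hc ?_
            simp [hTU, ha]
          rw [this]
          simp
      · have hcoef : d k * (2 * Sum.elim (fun _ => (-1:ℝ)) (fun _ => (1:ℝ)) ((Sum.inr a) : Fin m ⊕ Fin m))
            + 2 * Sum.elim d d ((Sum.inr a) : Fin m ⊕ Fin m) = 2 * (d a + d k) := by
          simp; ring
        rw [hcoef]
        have h2 : (0:ℝ) ≤ 2 * (d a + d k) := by
          have := hdp a; have := hdp k; linarith
        exact mul_nonneg h2 (Complex.normSq_nonneg _)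
    · intro hz0
      have hc0 : c ≠ 0 := by
        intro h0
        exact hz0 (by rw [h0, Matrix.mulVec_zero])
      rw [hqM c]
      obtain ⟨l, hl⟩ := Function.ne_iff.mp hc0
      refine Finset.sum_pos' (fun l' _ => ?_) ⟨l, Finset.mem_univ l, ?_⟩
      · have h0 : 0 ≤ Sum.elim d d l' := by
          rcases l' with a | a <;> simpa using (hdp a).le
        exact mul_nonneg (by linarith) (Complex.normSq_nonneg _)
      · have hdl : 0 < Sum.elim d d l := by rcases l with a | a <;> simpa using hdp a
        have hns : 0 < Complex.normSq (c l) := by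
          simpa [Complex.normSq_pos] using hl
        exact mul_pos (by linarith) hns

end SEI5

namespace SEI6
open SEI SEI2 SEI3 SEI4 SEI5

variable {ιB ιA : Type*} [Fintype ιB] [Fintype ιA] [DecidableEq ιA] [DecidableEq ιB]

/-- zero-one embedding matrix for an injection of index types -/
def emb (R : Type*) [CommRing R] (f : ιB → ιA) : Matrix ιA ιB R :=
  fun a b => if a = f b then 1 else 0

lemma embT_mul_mul (R : Type*) [CommRing R] (f : ιB → ιA) (M : Matrix ιA ιA R) :
    (emb R f)ᵀ * M * emb R f = M.submatrix f f := by
  ext b b'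
  simp [Matrix.mul_apply, emb, ite_mul, mul_ite, Finset.sum_ite_eq']

lemma embT_mul_emb (R : Type*) [CommRing R] {f : ιB → ιA} (hf : Function.Injective f) :
    (emb R f)ᵀ * emb R f = 1 := by
  ext b b'
  simp [Matrix.mul_apply, emb, ite_mul, mul_ite, Finset.sum_ite_eq', Matrix.one_apply, hf.eq_iff]
  simp [eq_comm]

lemma emb_mulVec_injective (R : Type*) [CommRing R] {f : ιB → ιA}
    (hf : Function.Injective f) : Function.Injective ((emb R f).mulVec) := by
  intro x y hxy
  have h : (emb R f)ᵀ *ᵥ ((emb R f) *ᵥ x) = (emb R f)ᵀ *ᵥ ((emb R f) *ᵥ y) := by rw [hxy]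
  rwa [Matrix.mulVec_mulVec, Matrix.mulVec_mulVec, embT_mul_emb R hf,
    Matrix.one_mulVec, Matrix.one_mulVec] at h

lemma emb_conjTranspose (f : ιB → ιA) : (emb ℂ f)ᴴ = (emb ℂ f)ᵀ := by
  ext b a
  simp [emb, Matrix.conjTranspose_apply, apply_ite (star : ℂ → ℂ)]

lemma qf_emb (f : ιB → ιA) (M : Matrix ιA ιA ℂ) (x : ιB → ℂ) :
    qf (M.submatrix f f) x = qf M ((emb ℂ f) *ᵥ x) := by
  rw [qf_mulVec, emb_conjTranspose, embT_mul_mul]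

lemma J_submatrix {n : ℕ} {g : Fin n → Fin (n+1)} (hg : Function.Injective g) :
    (Matrix.J (Fin (n+1)) ℂ).submatrix (Sum.map g g) (Sum.map g g) = Matrix.J (Fin n) ℂ := by
  ext (a | a) (b | b) <;>
    simp [Matrix.J, Matrix.one_apply, Matrix.neg_apply, hg.eq_iff, Matrix.fromBlocks]

lemma arith {α β t q : ℝ} (hα : 0 < α) (hβ : 0 < β) (hq : 0 < q)
    (h1 : 0 ≤ α * t + q) (h2 : β * t + q ≤ 0) : α ≤ β := by
  have ht : t < 0 := by nlinarith
  by_contra hlt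
  push_neg at hlt
  nlinarith [mul_pos (sub_pos.mpr hlt) (neg_pos.mpr ht)]

end SEI6

open SEI SEI2 SEI3 SEI4 SEI5 SEI6

/-- Symplectic eigenvalue interlacing. Let
`A ∈ ℝ^{2(n+1) × 2(n+1)}` be positive definite, and let `B` be obtained by
deleting, for some index `i`, the `i`-th row/column in each of the four
`(n+1) × (n+1)` blocks of `A` (i.e. the `i`-th and `(n+1+i)`-th rows and
columns of `A`). If `d` and `e` are the non-decreasingly ordered symplectic
eigenvalues of `A` and `B` respectively, then for all `j`:
`d_j(A) ≤ d_j(B)` and, whenever `j+2` is a valid index, `d_j(B) ≤ d_{j+2}(A)`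
(the convention `d_{n+1}(A) = ∞` corresponds to no constraint otherwise). -/
theorem symplectic_eigenvalue_interlacing {n : ℕ}
    (A : Matrix (Fin (n + 1) ⊕ Fin (n + 1)) (Fin (n + 1) ⊕ Fin (n + 1)) ℝ)
    (hA : A.PosDef) (i : Fin (n + 1))
    (B : Matrix (Fin n ⊕ Fin n) (Fin n ⊕ Fin n) ℝ)
    (hB : B = A.submatrix (Sum.map i.succAbove i.succAbove)
                          (Sum.map i.succAbove i.succAbove))
    (d : Fin (n + 1) → ℝ) (e : Fin n → ℝ)
    (hd : IsSymplecticSpectrum A d) (hdmono : Monotone d)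
    (he : IsSymplecticSpectrum B e) (hemono : Monotone e) :
    ∀ j : Fin n, d j.castSucc ≤ e j ∧
      ∀ hj : (j : ℕ) + 2 < n + 1, e j ≤ d ⟨(j : ℕ) + 2, hj⟩ := by
  intro j
  set f : (Fin n ⊕ Fin n) → (Fin (n+1) ⊕ Fin (n+1)) :=
    Sum.map i.succAbove i.succAbove with hfdef
  have hfinj : Function.Injective f :=
    Function.Injective.sumMap (Fin.succAbove_right_injective)
      (Fin.succAbove_right_injective)
  have hBA : B = (emb ℝ f)ᵀ * A * emb ℝ f := by rw [hB, embT_mul_mul]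
  have hBpos : B.PosDef := by
    rw [hBA]
    refine posDef_conj_real hA _ (fun x hx => ?_)
    have : emb ℝ f *ᵥ x = emb ℝ f *ᵥ 0 := by simpa [Matrix.mulVec_zero] using hx
    exact emb_mulVec_injective ℝ hfinj this
  have hembinjC : Function.Injective ((emb ℂ f).mulVec) := emb_mulVec_injective ℂ hfinj
  -- transport of quadratic forms
  have hqtrans : ∀ x : (Fin n ⊕ Fin n) → ℂ, qf (cm B) x = qf (cm A) ((emb ℂ f) *ᵥ x) := by
    intro x
    have h1 : cm B = (cm A).submatrix f f := by rw [hB]; rfl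
    rw [h1, qf_emb]
  have hJtrans : ∀ x : (Fin n ⊕ Fin n) → ℂ,
      qf (Complex.I • Matrix.J (Fin n) ℂ) x
        = qf (Complex.I • Matrix.J (Fin (n+1)) ℂ) ((emb ℂ f) *ᵥ x) := by
    intro x
    have hJsub := J_submatrix (g := i.succAbove) (Fin.succAbove_right_injective)
    have h1 : (Complex.I • Matrix.J (Fin (n+1)) ℂ).submatrix f f
        = Complex.I • Matrix.J (Fin n) ℂ := by
      ext a b
      have h2 := congrFun (congrFun hJsub a) b
      simp only [Matrix.submatrix_apply, Matrix.smul_apply, hfdef] at h2 ⊢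
      rw [h2]
    rw [← h1, qf_emb]
  have hΦinj : Function.Injective ⇑(emb ℂ f).mulVecLin := by
    rw [Matrix.coe_mulVecLin]; exact hembinjC
  have hcardA : Fintype.card (Fin (n+1) ⊕ Fin (n+1)) = 2 * n + 2 := by
    simp [Fintype.card_sum]; omega
  constructor
  · -- d_j(A) ≤ e_j(B)
    obtain ⟨hd1pos, _, UA, _, hUAr, _, hUAq⟩ := key hA hd hdmono j.castSucc
    obtain ⟨he1pos, VB, _, hVBr, _, hVBq, _⟩ := key hBpos he hemono j
    have hcard : Fintype.card (Fin (n+1) ⊕ Fin (n+1))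
        < Module.finrank ℂ (VB.map (emb ℂ f).mulVecLin) + Module.finrank ℂ UA := by
      rw [hcardA, ← LinearEquiv.finrank_eq (Submodule.equivMapOfInjective _ hΦinj VB),
        hVBr, hUAr]
      have hj1 : ((j.castSucc : Fin (n+1)) : ℕ) = (j : ℕ) := rfl
      rw [hj1]
      have := j.isLt
      omega
    obtain ⟨z, hzmem, hz0⟩ := inter_nontrivial _ _ hcard
    obtain ⟨hz1, hz2⟩ := Submodule.mem_inf.mp hzmem
    obtain ⟨x, hxB, rfl⟩ := Submodule.mem_map.mp hz1
    have h1 := hVBq x hxB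
    have h2 := (hUAq _ hz2).1
    have h3 := (hUAq _ hz2).2 hz0
    rw [hqtrans x, hJtrans x] at h1
    rw [Matrix.mulVecLin_apply] at h2 h3
    exact arith hd1pos he1pos h3 h2 h1
  · -- e_j(B) ≤ d_{j+2}(A)
    intro hj
    obtain ⟨hd2pos, VA, _, hVAr, _, hVAq, _⟩ := key hA hd hdmono ⟨(j : ℕ) + 2, hj⟩
    obtain ⟨he2pos, _, UB, _, hUBr, _, hUBq⟩ := key hBpos he hemono j
    have hcard : Fintype.card (Fin (n+1) ⊕ Fin (n+1))
        < Module.finrank ℂ VA + Module.finrank ℂ (UB.map (emb ℂ f).mulVecLin) := by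
      rw [hcardA, ← LinearEquiv.finrank_eq (Submodule.equivMapOfInjective _ hΦinj UB),
        hVAr, hUBr]
      have := j.isLt
      simp only []
      omega
    obtain ⟨z, hzmem, hz0⟩ := inter_nontrivial _ _ hcard
    obtain ⟨hz1, hz2⟩ := Submodule.mem_inf.mp hzmem
    obtain ⟨x, hxB, rfl⟩ := Submodule.mem_map.mp hz2
    have hx0 : x ≠ 0 := by
      intro h0
      exact hz0 (by rw [h0]; simp)
    have h1 := hVAq _ hz1
    have h2 := (hUBq x hxB).1
    have h3 := (hUBq x hxB).2 hx0
    rw [hqtrans x, hJtrans x] at h2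
    rw [hqtrans x] at h3
    rw [Matrix.mulVecLin_apply] at h1
    exact arith he2pos hd2pos h3 h2 h1
end
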